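/- Fix integers d ≥ 3, n ≥ d, p ∈ [0,1], δ ∈ (0,1), and a deterministic set T ⊆ [n] with |T| = k₀ ≥ 1. Under the law P_T of the hypergraph planted clique model with planted set T, the statistic q := ⟨u_T, M u_T⟩ satisfies, with probability at least 1 − δ/2: q ≥ s(n,k₀) − (1/k₀)·[ √(2·V(n,k₀)·log(4/δ)) + (2/3)·U_d·log(4/δ) ], where s(n,k₀) := (1−p)(k₀−1)·C(k₀−2,d−2), U_d := (d−1)(d−2), and V(n,k₀) := p(1−p)·Σ_{e ⊄ T} c_e(T)², the sum running over d-element subsets e of [n] not contained in T, with c_e(T) := |e ∩ T|·(|e ∩ T| − 1). -/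

import Mathlib

open MeasureTheory Filter Finset Matrix
open scoped ENNReal

namespace HPC

/-- Hyperedges: `d`-element subsets of `[n]`. -/
abbrev Edge (n d : ℕ) : Type := {e : Finset (Fin n) // e.card = d}

/-- A hyperedge configuration. -/
abbrev Config (n d : ℕ) : Type := Edge n d → Bool

instance {n : ℕ} : MeasurableSpace (Finset (Fin n)) := ⊤

/-- Bernoulli measure on `Bool` with success probability `p`. -/
noncomputable def bern (p : ℝ) : Measure Bool :=
  ENNReal.ofReal p • Measure.dirac true + ENNReal.ofReal (1 - p) • Measure.dirac false

/-- Law of the indicator of hyperedge `e` when the planted set is `S`: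
hyperedges inside `S` are present surely, the others with probability `p`. -/
noncomputable def edgeLaw (n d : ℕ) (p : ℝ) (S : Finset (Fin n)) (e : Edge n d) :
    Measure Bool :=
  if (e : Finset (Fin n)) ⊆ S then Measure.dirac true else bern p

/-- Conditional law of the configuration given the planted set `S`. -/
noncomputable def condLaw (n d : ℕ) (p : ℝ) (S : Finset (Fin n)) : Measure (Config n d) :=
  Measure.pi fun e => edgeLaw n d p S e

/-- Marginal law `P_k` of the configuration, the planted set being uniform of size `k`. -/
noncomputable def law (n d : ℕ) (p : ℝ) (k : ℕ) : Measure (Config n d) :=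
  (((univ : Finset (Finset (Fin n))).filter fun S => S.card = k).card : ℝ≥0∞)⁻¹ •
    ∑ S ∈ (univ : Finset (Finset (Fin n))).filter fun S => S.card = k, condLaw n d p S

/-- Joint law of the planted set (uniform of size `k`) and the configuration. -/
noncomputable def jointLaw (n d : ℕ) (p : ℝ) (k : ℕ) :
    Measure (Finset (Fin n) × Config n d) :=
  (((univ : Finset (Finset (Fin n))).filter fun S => S.card = k).card : ℝ≥0∞)⁻¹ •
    ∑ S ∈ (univ : Finset (Finset (Fin n))).filter fun S => S.card = k,
      Measure.map (fun H => (S, H)) (condLaw n d p S)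

/-- Adjacency matrix (pairwise co-occurrence counts) of a configuration. -/
noncomputable def adj (n d : ℕ) (H : Config n d) : Matrix (Fin n) (Fin n) ℝ :=
  Matrix.of fun i j =>
    if i = j then 0 else
      ∑ e : Edge n d,
        if i ∈ (e : Finset (Fin n)) ∧ j ∈ (e : Finset (Fin n)) ∧ H e = true then (1 : ℝ) else 0

/-- Null-model expectation `E₀[A]`. -/
noncomputable def expAdj (n d : ℕ) (p : ℝ) : Matrix (Fin n) (Fin n) ℝ :=
  Matrix.of fun i j => if i = j then 0 else ((n - 2).choose (d - 2) : ℝ) * p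

/-- Centered adjacency matrix `M = A − E₀[A]`. -/
noncomputable def centered (n d : ℕ) (p : ℝ) (H : Config n d) : Matrix (Fin n) (Fin n) ℝ :=
  adj n d H - expAdj n d p

/-- Spectral (ℓ²-operator) norm of a real square matrix. -/
noncomputable def specNorm {n : ℕ} (M : Matrix (Fin n) (Fin n) ℝ) : ℝ :=
  ‖LinearMap.toContinuousLinearMap (Matrix.toEuclideanLin M)‖

/-- Euclidean norm on `Fin n → ℝ`. -/
noncomputable def norm2 {n : ℕ} (v : Fin n → ℝ) : ℝ := Real.sqrt (∑ i, v i ^ 2)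

/-- Supremum norm on `Fin n → ℝ`. -/
noncomputable def normInf {n : ℕ} (v : Fin n → ℝ) : ℝ := ‖v‖

/-- Two-to-infinity norm: maximal Euclidean row norm. -/
noncomputable def norm2toInf {n : ℕ} (M : Matrix (Fin n) (Fin n) ℝ) : ℝ :=
  normInf fun i => norm2 (M i)

/-- `u` is a unit eigenvector of `M` for the eigenvalue `lam`, and `lam` is the
largest eigenvalue of `M`. -/
def IsTopEigenpair {n : ℕ} (M : Matrix (Fin n) (Fin n) ℝ) (lam : ℝ) (u : Fin n → ℝ) : Prop :=
  norm2 u = 1 ∧ M.mulVec u = lam • u ∧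
    ∀ (mu : ℝ) (v : Fin n → ℝ), v ≠ 0 → M.mulVec v = mu • v → mu ≤ lam

/-- `T` is a set of indices of `k` largest entries of `|u|` (ties broken arbitrarily). -/
def IsTopK {n : ℕ} (k : ℕ) (u : Fin n → ℝ) (T : Finset (Fin n)) : Prop :=
  T.card = k ∧ ∀ i ∈ T, ∀ j ∉ T, |u j| ≤ |u i|

/-- Normalized indicator vector `1_T / √|T|`. -/
noncomputable def uInd {n : ℕ} (T : Finset (Fin n)) : Fin n → ℝ :=
  fun i => if i ∈ T then (Real.sqrt T.card)⁻¹ else 0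

/-- Normalized indicator vector `1_S / √k`. -/
noncomputable def uStar {n : ℕ} (k : ℕ) (S : Finset (Fin n)) : Fin n → ℝ :=
  fun i => if i ∈ S then (Real.sqrt k)⁻¹ else 0

/-- `c_e(T) = |e ∩ T|·(|e ∩ T| − 1)`. -/
noncomputable def cE {n : ℕ} (e T : Finset (Fin n)) : ℝ :=
  ((e ∩ T).card : ℝ) * (((e ∩ T).card : ℝ) - 1)

/-- Co-membership matrix of a hyperedge. -/
noncomputable def coB {n : ℕ} (e : Finset (Fin n)) : Matrix (Fin n) (Fin n) ℝ :=
  Matrix.of fun i j => if i ≠ j ∧ i ∈ e ∧ j ∈ e then 1 else 0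

/-- `λ* = (1 − p)(k − 1)·C(k−2, d−2)`. -/
noncomputable def lamStar (d k : ℕ) (p : ℝ) : ℝ :=
  (1 - p) * ((k : ℝ) - 1) * ((k - 2).choose (d - 2) : ℝ)

noncomputable def wIn (n d k : ℕ) (p : ℝ) : ℝ :=
  ((k - 2).choose (d - 2) : ℝ) +
    p * (((n - 2).choose (d - 2) : ℝ) - ((k - 2).choose (d - 2) : ℝ))

noncomputable def wOut (n d : ℕ) (p : ℝ) : ℝ := p * ((n - 2).choose (d - 2) : ℝ)

/-- `M* = (w_in − w_out)·(1_S 1_Sᵀ − I_S)`, the conditional expectation `E_S[M]`. -/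
noncomputable def mStarOf (n d k : ℕ) (p : ℝ) (S : Finset (Fin n)) :
    Matrix (Fin n) (Fin n) ℝ :=
  Matrix.of fun i j =>
    (wIn n d k p - wOut n d p) *
      ((if i ∈ S then (1 : ℝ) else 0) * (if j ∈ S then 1 else 0) -
        if i = j ∧ i ∈ S then 1 else 0)

/-- Leave-one-out perturbation `B^{(m)} = Σ_{e ∋ m} (H_e − p)·B_e`. -/
noncomputable def bMat (n d : ℕ) (p : ℝ) (H : Config n d) (m : Fin n) :
    Matrix (Fin n) (Fin n) ℝ :=
  ∑ e : Edge n d,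
    if m ∈ (e : Finset (Fin n)) then
      ((if H e then (1 : ℝ) else 0) - p) • coB (e : Finset (Fin n))
    else 0

/-- `(lam, U)` is an orthonormal eigendecomposition of `A` with eigenvalues listed in
nonincreasing order. -/
def IsEigenDecomp {n : ℕ} (A : Matrix (Fin n) (Fin n) ℝ) (lam : Fin n → ℝ)
    (U : Fin n → Fin n → ℝ) : Prop :=
  (∀ i j, U i ⬝ᵥ U j = if i = j then (1 : ℝ) else 0) ∧
    (∀ i, A.mulVec (U i) = lam i • U i) ∧ Antitone lam

/-- Maximum of a real function over `Fin n`, `n > 0`. -/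
noncomputable def maxOver {n : ℕ} (hn : 0 < n) (f : Fin n → ℝ) : ℝ :=
  (univ : Finset (Fin n)).sup' ⟨⟨0, hn⟩, Finset.mem_univ _⟩ f

/-- `min_{i ≥ 2} |lam i − x|`, the minimum over non-leading indices. -/
noncomputable def minOffTop {n : ℕ} [NeZero n] (hn : 2 ≤ n) (lam : Fin n → ℝ) (x : ℝ) : ℝ :=
  ((univ : Finset (Fin n)).filter fun i => i ≠ 0).inf'
    ⟨⟨1, by omega⟩, by
      simp only [Finset.mem_filter, Finset.mem_univ, true_and, ne_eq]
      intro h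
      simpa using congrArg Fin.val h⟩
    fun i => |lam i - x|

end HPC

open HPC MeasureTheory Filter Finset Matrix
open scoped ENNReal Topology


section Aux
open Real

lemma fact_ge (n : ℕ) : 2 * 3 ^ n ≤ (n+2).factorial := by
  induction n with
  | zero => simp [Nat.factorial]
  | succ m ih =>
    have : (m+3).factorial = (m+3) * (m+2).factorial := rfl
    calc 2 * 3 ^ (m+1) = 3 * (2 * 3 ^ m) := by ring
    _ ≤ 3 * (m+2).factorial := by omega
    _ ≤ (m+3) * (m+2).factorial := by
        exact Nat.mul_le_mul_right _ (by omega)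
    _ = (m+3).factorial := rfl

lemma exp_quad_neg {x : ℝ} (hx : x ≤ 0) : Real.exp x ≤ 1 + x + x^2/2 := by
  set G : ℝ → ℝ := fun y => 1 + y + y^2/2 - Real.exp y with hG
  have hd : ∀ y, HasDerivAt G (1 + y - Real.exp y) y := by
    intro y
    have h1 : HasDerivAt (fun y : ℝ => 1 + y + y^2/2) (1 + y) y := by
      have := ((hasDerivAt_id y).const_add (1:ℝ)).add
        (((hasDerivAt_pow 2 y)).div_const 2)
      exact this.congr_deriv (by push_cast; ring)
    exact h1.sub (Real.hasDerivAt_exp y)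
  have hmono : AntitoneOn G (Set.Iic 0) := by
    apply antitoneOn_of_deriv_nonpos (convex_Iic 0)
    · exact (Continuous.sub (by continuity) Real.continuous_exp).continuousOn
    · intro y hy
      exact (hd y).differentiableAt.differentiableWithinAt
    · intro y hy
      rw [(hd y).deriv]
      nlinarith [Real.add_one_le_exp y]
  have := hmono (Set.mem_Iic.2 hx) (Set.mem_Iic.2 le_rfl) hx
  simp only [hG] at this
  nlinarith [this, Real.exp_zero]

lemma exp_quad_pos {x : ℝ} (h0 : 0 ≤ x) (h3 : x < 3) :
    Real.exp x ≤ 1 + x + x^2/2 * (1 - x/3)⁻¹ := by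
  have hr0 : (0:ℝ) ≤ x/3 := by linarith
  have hr1 : x/3 < 1 := by linarith
  have hsum : Summable (fun n : ℕ => x^n / n.factorial) := Real.summable_pow_div_factorial x
  have hgeo : Summable (fun n : ℕ => x^2/2 * (x/3)^n) :=
    (summable_geometric_of_lt_one hr0 hr1).mul_left _
  have hshift : Summable (fun n : ℕ => x^(n+2) / (n+2).factorial) :=
    hsum.comp_injective (add_left_injective 2)
  have hs1 : Summable (fun n : ℕ => x^(n+1) / (n+1).factorial) :=
    hsum.comp_injective (add_left_injective 1)
  have hexp : Real.exp x = ∑' n : ℕ, x^n / n.factorial := by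
    rw [Real.exp_eq_exp_ℝ, NormedSpace.exp_eq_tsum_div]
  rw [hexp, hsum.tsum_eq_zero_add, hs1.tsum_eq_zero_add]
  have hle : (∑' n : ℕ, x^(n+1+1) / (n+1+1).factorial) ≤ ∑' n : ℕ, x^2/2 * (x/3)^n := by
    apply Summable.tsum_le_tsum _ (by exact_mod_cast hshift) hgeo
    intro n
    have h1 : x^2/2 * (x/3)^n = x^(n+2) / (2 * 3^n) := by
      rw [div_pow]; ring
    have h2 : x^(n+1+1) / ((n+1+1).factorial : ℝ) = x^(n+2) / ((n+2).factorial : ℝ) := by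
      norm_num
    rw [h1, h2]
    apply div_le_div_of_nonneg_left (pow_nonneg h0 _) (by positivity)
    exact_mod_cast fact_ge n
  have hgeq : (∑' n : ℕ, x^2/2 * (x/3)^n) = x^2/2 * (1 - x/3)⁻¹ := by
    rw [tsum_mul_left, tsum_geometric_of_lt_one hr0 hr1]
  rw [hgeq] at hle
  simp only [pow_zero, Nat.factorial_zero, Nat.factorial_one, pow_one, Nat.cast_one]
  norm_num
  linarith

lemma exp_quad {x c : ℝ} (hc0 : 0 < c) (hc3 : c < 3) (hx : |x| ≤ c) :
    Real.exp x ≤ 1 + x + x^2 * (2*(1 - c/3))⁻¹ := by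
  have h13 : 0 < 1 - c/3 := by linarith
  rcases le_or_gt x 0 with h | h
  · have h1 := exp_quad_neg h
    have hA : (2:ℝ)⁻¹ ≤ (2*(1 - c/3))⁻¹ := inv_anti₀ (by linarith) (by linarith)
    nlinarith [sq_nonneg x]
  · have hx3 : x < 3 := lt_of_le_of_lt (le_trans (le_abs_self x) hx) hc3
    have h1 := exp_quad_pos h.le hx3
    have hxc : x ≤ c := le_trans (le_abs_self x) hx
    have hx13 : 0 < 1 - x/3 := by linarith
    have h2 : x^2/2 * (1-x/3)⁻¹ ≤ x^2 * (2*(1-c/3))⁻¹ := by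
      have he : x^2 * (2*(1-c/3))⁻¹ = x^2/2 * (1-c/3)⁻¹ := by
        rw [mul_inv]; ring
      rw [he]
      gcongr
    linarith

end Aux


section Meas
open MeasureTheory Real

lemma bern_isProb {p : ℝ} (h0 : 0 ≤ p) (h1 : p ≤ 1) :
    IsProbabilityMeasure (HPC.bern p) := by
  constructor
  simp only [HPC.bern, Measure.add_apply, Measure.smul_apply, measure_univ, smul_eq_mul, mul_one]
  rw [← ENNReal.ofReal_add h0 (by linarith)]
  norm_num

lemma edgeLaw_isProb {n d : ℕ} {p : ℝ} (h0 : 0 ≤ p) (h1 : p ≤ 1)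
    (S : Finset (Fin n)) (e : Edge n d) : IsProbabilityMeasure (edgeLaw n d p S e) := by
  unfold HPC.edgeLaw
  split
  · infer_instance
  · exact bern_isProb h0 h1

lemma integral_bern {p : ℝ} (h0 : 0 ≤ p) (h1 : p ≤ 1) (f : Bool → ℝ) :
    ∫ b, f b ∂(HPC.bern p) = p * f true + (1 - p) * f false := by
  haveI h1' : IsFiniteMeasure ((ENNReal.ofReal p) • Measure.dirac true) :=
    ⟨by simp [ENNReal.ofReal_lt_top, ENNReal.mul_lt_top]⟩
  haveI h2' : IsFiniteMeasure ((ENNReal.ofReal (1 - p)) • Measure.dirac false) :=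
    ⟨by simp [ENNReal.ofReal_lt_top, ENNReal.mul_lt_top]⟩
  unfold HPC.bern
  rw [integral_add_measure Integrable.of_finite Integrable.of_finite,
    integral_smul_measure, integral_smul_measure, integral_dirac, integral_dirac,
    ENNReal.toReal_ofReal h0, ENNReal.toReal_ofReal (by linarith)]
  simp [smul_eq_mul]

lemma mgf_coord {p lam a U : ℝ} (h0 : 0 ≤ p) (h1 : p ≤ 1) (hlam : 0 ≤ lam)
    (hU : 0 < lam * U) (hU3 : lam * U < 3) (ha0 : 0 ≤ a) (haU : a ≤ U) :
    ∫ b, Real.exp (lam * ((p - (if b then (1:ℝ) else 0)) * a)) ∂(HPC.bern p)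
      ≤ Real.exp (p * (1 - p) * a ^ 2 * lam ^ 2 * (2 * (1 - lam * U / 3))⁻¹) := by
  rw [integral_bern h0 h1]
  set g : ℝ := (2 * (1 - lam * U / 3))⁻¹ with hgdef
  have h13 : (0:ℝ) < 1 - lam * U / 3 := by linarith
  have hg0 : 0 ≤ g := by rw [hgdef]; positivity
  set x1 : ℝ := lam * ((p - 1) * a) with hx1
  set x2 : ℝ := lam * ((p - 0) * a) with hx2
  have hb1 : |x1| ≤ lam * U := by
    rw [hx1, abs_mul, abs_mul, abs_of_nonneg hlam, abs_of_nonpos (by linarith : p - 1 ≤ 0),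
      abs_of_nonneg ha0]
    have h' : lam * a ≤ lam * U := mul_le_mul_of_nonneg_left haU hlam
    nlinarith [mul_nonneg hlam ha0]
  have hb2 : |x2| ≤ lam * U := by
    rw [hx2, abs_mul, abs_mul, abs_of_nonneg hlam, abs_of_nonneg (by linarith : (0:ℝ) ≤ p - 0),
      abs_of_nonneg ha0]
    have h' : lam * a ≤ lam * U := mul_le_mul_of_nonneg_left haU hlam
    nlinarith [mul_nonneg hlam ha0]
  have e1 := exp_quad hU hU3 hb1
  have e2 := exp_quad hU hU3 hb2
  have key : p * (1 + x1 + x1 ^ 2 * g) + (1 - p) * (1 + x2 + x2 ^ 2 * g)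
      = 1 + p * (1 - p) * a ^ 2 * lam ^ 2 * g := by
    rw [hx1, hx2]; ring
  have hsum : p * Real.exp x1 + (1 - p) * Real.exp x2
      ≤ 1 + p * (1 - p) * a ^ 2 * lam ^ 2 * g := by
    have t1 : p * Real.exp x1 ≤ p * (1 + x1 + x1 ^ 2 * g) :=
      mul_le_mul_of_nonneg_left e1 h0
    have t2 : (1 - p) * Real.exp x2 ≤ (1 - p) * (1 + x2 + x2 ^ 2 * g) :=
      mul_le_mul_of_nonneg_left e2 (by linarith)
    linarith
  have := Real.add_one_le_exp (p * (1 - p) * a ^ 2 * lam ^ 2 * g)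
  have hfin : p * Real.exp x1 + (1 - p) * Real.exp x2
      ≤ Real.exp (p * (1 - p) * a ^ 2 * lam ^ 2 * g) := by linarith
  refine le_trans (le_of_eq ?_) hfin
  norm_num
  simp [hx1, hx2]

lemma integral_pi_prod {ι : Type*} [Fintype ι] (μ : ι → Measure Bool)
    [∀ i, IsProbabilityMeasure (μ i)] (f : ι → Bool → ℝ) :
    ∫ x : ι → Bool, ∏ i, f i (x i) ∂(Measure.pi μ) = ∏ i, ∫ b, f i b ∂(μ i) := by
  exact MeasureTheory.integral_fintype_prod_eq_prod (fun i b => f i b)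

lemma cE_nonneg {n : ℕ} (e T : Finset (Fin n)) : 0 ≤ cE e T := by
  unfold HPC.cE
  rcases Nat.eq_zero_or_pos (e ∩ T).card with h | h
  · simp [h]
  · have h1 : (1:ℝ) ≤ ((e ∩ T).card : ℝ) := by exact_mod_cast h
    nlinarith

lemma cE_le {n d : ℕ} (hd : 3 ≤ d) (e : Edge n d) (T : Finset (Fin n))
    (h : ¬ (e : Finset (Fin n)) ⊆ T) : cE (e : Finset (Fin n)) T ≤ ((d:ℝ)-1)*((d:ℝ)-2) := by
  have hss : (e : Finset (Fin n)) ∩ T ⊂ (e : Finset (Fin n)) := by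
    refine ⟨Finset.inter_subset_left, fun hsub => h ?_⟩
    exact Finset.inter_eq_left.mp (le_antisymm Finset.inter_subset_left hsub)
  have hlt : ((e : Finset (Fin n)) ∩ T).card < d := by
    have := Finset.card_lt_card hss
    rw [e.2] at this
    exact this
  have hm : (((e : Finset (Fin n)) ∩ T).card : ℝ) ≤ (d:ℝ) - 1 := by
    have : ((e : Finset (Fin n)) ∩ T).card ≤ d - 1 := by omega
    have h2 := (Nat.cast_le (α := ℝ)).2 this
    have h3 : ((d - 1 : ℕ) : ℝ) = (d:ℝ) - 1 := by
      have : (1:ℕ) ≤ d := by omega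
      push_cast [this]; ring
    rw [h3] at h2; linarith
  have hm0 : (0:ℝ) ≤ (((e : Finset (Fin n)) ∩ T).card : ℝ) := Nat.cast_nonneg _
  have hd3 : (3:ℝ) ≤ (d:ℝ) := by exact_mod_cast hd
  unfold HPC.cE
  nlinarith [mul_nonneg (sub_nonneg.2 hm) (by linarith : (0:ℝ) ≤ (d:ℝ) - 2 + (((e : Finset (Fin n)) ∩ T).card : ℝ))]

lemma edgeLaw_mgf_bound {n d : ℕ} (hd : 3 ≤ d) {p lam : ℝ}
    (h0 : 0 ≤ p) (h1 : p ≤ 1) (hlam : 0 ≤ lam) {U : ℝ} (hUdef : U = ((d:ℝ)-1)*((d:ℝ)-2))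
    (hU : 0 < lam * U) (hU3 : lam * U < 3) (T : Finset (Fin n)) (e : Edge n d) :
    ∫ b, Real.exp (lam * ((p - (if b then (1:ℝ) else 0)) *
        (if (e : Finset (Fin n)) ⊆ T then 0 else cE (e : Finset (Fin n)) T)))
      ∂(edgeLaw n d p T e)
      ≤ Real.exp (p * (1 - p) *
          (if (e : Finset (Fin n)) ⊆ T then 0 else cE (e : Finset (Fin n)) T) ^ 2
          * lam ^ 2 * (2 * (1 - lam * U / 3))⁻¹) := by
  unfold HPC.edgeLaw
  by_cases h : (e : Finset (Fin n)) ⊆ T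
  · simp only [if_pos h]
    rw [integral_dirac]
    simp
  · simp only [if_neg h]
    refine mgf_coord h0 h1 hlam hU hU3 (cE_nonneg _ _) ?_
    rw [hUdef]
    exact cE_le hd e T h

end Meas


section Count
open Finset

lemma choose_aux (a b : ℕ) :
    a.choose (b+2) * ((b+2)*(b+1)) = a*(a-1)*((a-2).choose b) := by
  match a with
  | 0 => simp [Nat.choose_eq_zero_of_lt]
  | 1 => simp [Nat.choose_eq_zero_of_lt]
  | (a'+2) =>
    have h1 : (a'+2) * (a'+1).choose (b+1) = (a'+2).choose (b+2) * (b+2) := by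
      simpa using Nat.add_one_mul_choose_eq (a'+1) (b+1)
    have h2 : (a'+1) * a'.choose b = (a'+1).choose (b+1) * (b+1) := by
      simpa using Nat.add_one_mul_choose_eq a' b
    have : (a'+2).choose (b+2) * ((b+2)*(b+1)) = (a'+2) * ((a'+1) * a'.choose b) := by
      calc (a'+2).choose (b+2) * ((b+2)*(b+1)) = ((a'+2).choose (b+2) * (b+2)) * (b+1) := by ring
      _ = ((a'+2) * (a'+1).choose (b+1)) * (b+1) := by rw [h1]
      _ = (a'+2) * ((a'+1).choose (b+1) * (b+1)) := by ring
      _ = (a'+2) * ((a'+1) * a'.choose b) := by rw [h2]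
    simpa [Nat.succ_sub_one] using this.trans (by ring)

lemma pair_sum {α : Type*} [DecidableEq α] (A : Finset α) (c : ℝ) :
    ∑ i ∈ A, ∑ j ∈ A, (if i = j then (0:ℝ) else c)
      = ((A.card:ℝ) * ((A.card:ℝ) - 1)) * c := by
  have h : ∀ i ∈ A, ∑ j ∈ A, (if i = j then (0:ℝ) else c) = (A.card:ℝ)*c - c := by
    intro i hi
    have hstep : ∀ j, (if i = j then (0:ℝ) else c) = c - (if i = j then c else 0) := by
      intro j; split <;> ring
    rw [Finset.sum_congr rfl (fun j _ => hstep j), Finset.sum_sub_distrib,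
      Finset.sum_const, Finset.sum_ite_eq A i (fun _ => c), if_pos hi]
    simp [nsmul_eq_mul]
  rw [Finset.sum_congr rfl h, Finset.sum_const]
  simp only [nsmul_eq_mul]
  ring

lemma count_inner {n : ℕ} (e T : Finset (Fin n)) :
    ∑ i ∈ T, ∑ j ∈ T, (if i = j then (0:ℝ) else if i ∈ e ∧ j ∈ e then 1 else 0)
      = cE e T := by
  have hin : ∀ i, ∑ j ∈ T, (if i = j then (0:ℝ) else if i ∈ e ∧ j ∈ e then 1 else 0)
      = if i ∈ e then (∑ j ∈ T ∩ e, if i = j then (0:ℝ) else 1) else 0 := by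
    intro i
    by_cases h2 : i ∈ e
    · rw [if_pos h2, ← Finset.sum_ite_mem]
      apply Finset.sum_congr rfl
      intro j _
      by_cases h1 : i = j <;> by_cases h3 : j ∈ e <;> simp [h1, h2, h3]
    · rw [if_neg h2]
      apply Finset.sum_eq_zero
      intro j _
      by_cases h1 : i = j <;> simp [h1, h2]
  rw [Finset.sum_congr rfl (fun i _ => hin i), Finset.sum_ite_mem]
  rw [pair_sum (T ∩ e) 1]
  unfold HPC.cE
  rw [Finset.inter_comm]
  ring

lemma sum_edge {n d : ℕ} (f : Finset (Fin n) → ℝ) :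
    ∑ e : Edge n d, f (e : Finset (Fin n))
      = ∑ e ∈ Finset.powersetCard d (univ : Finset (Fin n)), f e :=
  (Finset.sum_subtype _ (fun e => by simp [Finset.mem_powersetCard]) f).symm

lemma card_supersets {n d : ℕ} (hd2 : 2 ≤ d) {i j : Fin n} (hij : i ≠ j) :
    ((Finset.powersetCard d (univ : Finset (Fin n))).filter
        (fun e => i ∈ e ∧ j ∈ e)).card = (n-2).choose (d-2) := by
  have hij2 : ({i, j} : Finset (Fin n)).card = 2 := by
    rw [Finset.card_insert_of_notMem (by simpa using hij), Finset.card_singleton]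
  have hcard : ((univ : Finset (Fin n)) \ {i, j}).card = n - 2 := by
    rw [Finset.card_sdiff_of_subset (Finset.subset_univ _), hij2, Finset.card_univ, Fintype.card_fin]
  rw [← hcard, ← Finset.card_powersetCard]
  apply Finset.card_nbij' (fun e => e \ {i, j}) (fun f => f ∪ {i, j})
  · intro e he
    rw [Finset.mem_coe, Finset.mem_filter, Finset.mem_powersetCard] at he
    have hsub : ({i, j} : Finset (Fin n)) ⊆ e := by
      intro x hx
      rcases Finset.mem_insert.mp hx with h | h
      · exact h ▸ he.2.1
      · exact (Finset.mem_singleton.mp h) ▸ he.2.2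
    rw [Finset.mem_coe, Finset.mem_powersetCard]
    refine ⟨Finset.sdiff_subset_sdiff (Finset.subset_univ _) le_rfl, ?_⟩
    rw [Finset.card_sdiff_of_subset hsub, hij2, he.1.2]
  · intro f hf
    rw [Finset.mem_coe, Finset.mem_powersetCard] at hf
    have hdisj : Disjoint f ({i, j} : Finset (Fin n)) := by
      rw [Finset.disjoint_left]
      intro x hx hx2
      have := hf.1 hx
      rw [Finset.mem_sdiff] at this
      exact this.2 hx2
    rw [Finset.mem_coe, Finset.mem_filter, Finset.mem_powersetCard]
    refine ⟨⟨Finset.subset_univ _, ?_⟩, ?_, ?_⟩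
    · rw [Finset.card_union_of_disjoint hdisj, hf.2, hij2]; omega
    · exact Finset.mem_union_right _ (Finset.mem_insert_self i {j})
    · exact Finset.mem_union_right _ (by simp)
  · intro e he
    rw [Finset.mem_coe, Finset.mem_filter] at he
    apply Finset.sdiff_union_of_subset
    intro x hx
    rcases Finset.mem_insert.mp hx with h | h
    · exact h ▸ he.2.1
    · exact (Finset.mem_singleton.mp h) ▸ he.2.2
  · intro f hf
    rw [Finset.mem_coe, Finset.mem_powersetCard] at hf
    show (f ∪ {i, j}) \ {i, j} = f
    rw [Finset.union_sdiff_right]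
    apply Finset.sdiff_eq_self_of_disjoint
    rw [Finset.disjoint_left]
    intro x hx hx2
    have := hf.1 hx
    rw [Finset.mem_sdiff] at this
    exact this.2 hx2

lemma sum_cE_all {n d : ℕ} (hd2 : 2 ≤ d) (T : Finset (Fin n)) :
    ∑ e : Edge n d, cE (e : Finset (Fin n)) T
      = (T.card : ℝ) * ((T.card : ℝ) - 1) * ((n-2).choose (d-2) : ℝ) := by
  rw [sum_edge (fun e => cE e T)]
  have h1 : ∀ e ∈ Finset.powersetCard d (univ : Finset (Fin n)), cE e T
      = ∑ i ∈ T, ∑ j ∈ T, (if i = j then (0:ℝ)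
          else if i ∈ e ∧ j ∈ e then 1 else 0) :=
    fun e _ => (count_inner e T).symm
  rw [Finset.sum_congr rfl h1, Finset.sum_comm]
  have h3 : ∀ i ∈ T, (∑ e ∈ Finset.powersetCard d (univ : Finset (Fin n)), ∑ j ∈ T,
        (if i = j then (0:ℝ) else if i ∈ e ∧ j ∈ e then 1 else 0))
      = ∑ j ∈ T, (if i = j then (0:ℝ) else ((n-2).choose (d-2) : ℝ)) := by
    intro i _
    rw [Finset.sum_comm]
    apply Finset.sum_congr rfl
    intro j _
    by_cases hij : i = j
    · simp [hij]
    · have hstep : ∀ e ∈ Finset.powersetCard d (univ : Finset (Fin n)),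
          (if i = j then (0:ℝ) else if i ∈ e ∧ j ∈ e then 1 else 0)
          = if i ∈ e ∧ j ∈ e then 1 else 0 := fun e _ => if_neg hij
      rw [Finset.sum_congr rfl hstep, Finset.sum_boole, if_neg hij,
        card_supersets hd2 hij]
  rw [Finset.sum_congr rfl h3, pair_sum]

lemma sum_cE_inside {n d : ℕ} (hd2 : 2 ≤ d) (T : Finset (Fin n)) :
    ∑ e : Edge n d, (if (e : Finset (Fin n)) ⊆ T then cE (e : Finset (Fin n)) T else 0)
      = ((T.card * (T.card - 1) * ((T.card-2).choose (d-2)) : ℕ) : ℝ) := by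
  rw [sum_edge (fun e => if e ⊆ T then cE e T else 0)]
  have hfilt : (Finset.powersetCard d (univ : Finset (Fin n))).filter (fun e => e ⊆ T)
      = Finset.powersetCard d T := by
    ext e
    simp only [Finset.mem_filter, Finset.mem_powersetCard]
    constructor
    · rintro ⟨⟨-, hc⟩, hsub⟩; exact ⟨hsub, hc⟩
    · rintro ⟨hsub, hc⟩; exact ⟨⟨Finset.subset_univ _, hc⟩, hsub⟩
  have hval : ∀ e ∈ Finset.powersetCard d T, cE e T = (d:ℝ) * ((d:ℝ) - 1) := by
    intro e he
    rw [Finset.mem_powersetCard] at he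
    unfold HPC.cE
    rw [Finset.inter_eq_left.mpr he.1, he.2]
  rw [← Finset.sum_filter, hfilt, Finset.sum_congr rfl hval, Finset.sum_const,
    Finset.card_powersetCard, nsmul_eq_mul]
  have hchoose := choose_aux T.card (d-2)
  have hd' : d - 2 + 2 = d := by omega
  have hd2' : d - 2 + 1 = d - 1 := by omega
  rw [hd', hd2'] at hchoose
  rw [← hchoose]
  have hd1 : (1:ℕ) ≤ d := by omega
  push_cast [Nat.cast_sub hd1]
  ring

end Count


section Ident
open Finset

lemma quad_identity {n d : ℕ} (hd : 3 ≤ d) (T : Finset (Fin n)) (hk : 1 ≤ T.card)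
    (p : ℝ) (H : Config n d) (hH : ∀ e : Edge n d, (e : Finset (Fin n)) ⊆ T → H e = true) :
    uInd T ⬝ᵥ (centered n d p H).mulVec (uInd T)
      = (1 - p) * ((T.card : ℝ) - 1) * (((T.card : ℕ) - 2).choose (d - 2) : ℝ)
        + ((T.card : ℝ))⁻¹ * ∑ e : Edge n d,
            ((if H e then (1:ℝ) else 0) - p) *
              (if (e : Finset (Fin n)) ⊆ T then 0 else cE (e : Finset (Fin n)) T) := by
  classical
  set r : ℝ := (Real.sqrt (T.card : ℝ))⁻¹ with hrdef
  have hk0 : (0:ℝ) < (T.card : ℝ) := by exact_mod_cast hk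
  have hrr : r * r = ((T.card : ℝ))⁻¹ := by
    rw [hrdef, ← mul_inv, Real.mul_self_sqrt hk0.le]
  -- expansion of the quadratic form
  have expand : ∀ (M : Matrix (Fin n) (Fin n) ℝ),
      uInd T ⬝ᵥ M.mulVec (uInd T) = ∑ i ∈ T, ∑ j ∈ T, r * (M i j * r) := by
    intro M
    have hmv : ∀ i, M.mulVec (uInd T) i = ∑ j ∈ T, M i j * r := by
      intro i
      show ∑ j, M i j * uInd T j = _
      have : ∀ j, M i j * uInd T j = if j ∈ T then M i j * r else 0 := by
        intro j
        unfold HPC.uInd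
        by_cases hj : j ∈ T <;> simp [hj, hrdef]
      rw [Finset.sum_congr rfl (fun j _ => this j), Finset.sum_ite_mem, Finset.univ_inter]
    show ∑ i, uInd T i * M.mulVec (uInd T) i = _
    have h1 : ∀ i, uInd T i * M.mulVec (uInd T) i
        = if i ∈ T then r * (∑ j ∈ T, M i j * r) else 0 := by
      intro i
      rw [hmv i]
      unfold HPC.uInd
      by_cases hi : i ∈ T <;> simp [hi, hrdef]
    rw [Finset.sum_congr rfl (fun i _ => h1 i), Finset.sum_ite_mem, Finset.univ_inter]
    apply Finset.sum_congr rfl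
    intro i _
    rw [Finset.mul_sum]
  rw [expand]
  -- pull out the scalars
  have hpull : ∑ i ∈ T, ∑ j ∈ T, r * (centered n d p H i j * r)
      = (r * r) * ∑ i ∈ T, ∑ j ∈ T, centered n d p H i j := by
    rw [Finset.mul_sum]
    apply Finset.sum_congr rfl
    intro i _
    rw [Finset.mul_sum]
    apply Finset.sum_congr rfl
    intro j _
    ring
  rw [hpull, hrr]
  -- split centered into adj minus expAdj
  have hcent : ∀ i j, centered n d p H i j = adj n d H i j - expAdj n d p i j := fun i j => rfl
  have hsplit : ∑ i ∈ T, ∑ j ∈ T, centered n d p H i j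
      = (∑ i ∈ T, ∑ j ∈ T, adj n d H i j) - ∑ i ∈ T, ∑ j ∈ T, expAdj n d p i j := by
    rw [← Finset.sum_sub_distrib]
    apply Finset.sum_congr rfl
    intro i _
    rw [← Finset.sum_sub_distrib]
    exact Finset.sum_congr rfl (fun j _ => hcent i j)
  rw [hsplit]
  -- the expected part
  have hexp : ∑ i ∈ T, ∑ j ∈ T, expAdj n d p i j
      = ((T.card:ℝ) * ((T.card:ℝ) - 1)) * (((n-2).choose (d-2) : ℝ) * p) := by
    have : ∀ i j, expAdj n d p i j = if i = j then (0:ℝ) else ((n-2).choose (d-2) : ℝ) * p :=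
      fun i j => rfl
    rw [← pair_sum T (((n-2).choose (d-2) : ℝ) * p)]
    exact Finset.sum_congr rfl (fun i _ => Finset.sum_congr rfl (fun j _ => this i j))
  -- the adjacency part
  have hadj : ∀ i j, adj n d H i j = ∑ e : Edge n d, (if H e then (1:ℝ) else 0) *
      (if i = j then (0:ℝ) else if i ∈ (e : Finset (Fin n)) ∧ j ∈ (e : Finset (Fin n))
        then 1 else 0) := by
    intro i j
    show (if i = j then (0:ℝ) else ∑ e : Edge n d,
        if i ∈ (e : Finset (Fin n)) ∧ j ∈ (e : Finset (Fin n)) ∧ H e = true then (1:ℝ) else 0) = _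
    by_cases hij : i = j
    · simp [hij]
    · rw [if_neg hij]
      apply Finset.sum_congr rfl
      intro e _
      by_cases h1 : H e <;> by_cases h2 : i ∈ (e : Finset (Fin n)) <;>
        by_cases h3 : j ∈ (e : Finset (Fin n)) <;> simp [h1, h2, h3, hij]
  have hadjsum : ∑ i ∈ T, ∑ j ∈ T, adj n d H i j
      = ∑ e : Edge n d, (if H e then (1:ℝ) else 0) * cE (e : Finset (Fin n)) T := by
    rw [Finset.sum_congr rfl (fun i (_ : i ∈ T) => Finset.sum_congr rfl
      (fun j (_ : j ∈ T) => hadj i j))]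
    have s1 : ∀ i ∈ T, (∑ j ∈ T, ∑ e : Edge n d, (if H e then (1:ℝ) else 0) *
        (if i = j then (0:ℝ) else if i ∈ (e : Finset (Fin n)) ∧ j ∈ (e : Finset (Fin n))
          then 1 else 0))
        = ∑ e : Edge n d, ∑ j ∈ T, (if H e then (1:ℝ) else 0) *
        (if i = j then (0:ℝ) else if i ∈ (e : Finset (Fin n)) ∧ j ∈ (e : Finset (Fin n))
          then 1 else 0) :=
      fun i _ => Finset.sum_comm
    rw [Finset.sum_congr rfl s1, Finset.sum_comm]
    apply Finset.sum_congr rfl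
    intro e _
    rw [← count_inner (e : Finset (Fin n)) T, Finset.mul_sum]
    apply Finset.sum_congr rfl
    intro i _
    rw [Finset.mul_sum]
  rw [hadjsum, hexp]
  -- split the hyperedge sum into inside / outside parts
  have hd2 : 2 ≤ d := by omega
  have hbsplit : ∑ e : Edge n d, (if H e then (1:ℝ) else 0) * cE (e : Finset (Fin n)) T
      = ((T.card * (T.card - 1) * ((T.card-2).choose (d-2)) : ℕ) : ℝ)
        + ∑ e : Edge n d, (if H e then (1:ℝ) else 0) *
            (if (e : Finset (Fin n)) ⊆ T then 0 else cE (e : Finset (Fin n)) T) := by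
    rw [← sum_cE_inside hd2 T, ← Finset.sum_add_distrib]
    apply Finset.sum_congr rfl
    intro e _
    by_cases he : (e : Finset (Fin n)) ⊆ T
    · rw [if_pos he, if_pos he, hH e he]; simp
    · rw [if_neg he, if_neg he]; simp
  have hSA : ∑ e : Edge n d, (if (e : Finset (Fin n)) ⊆ T then (0:ℝ)
        else cE (e : Finset (Fin n)) T)
      = (T.card:ℝ) * ((T.card:ℝ) - 1) * ((n-2).choose (d-2) : ℝ)
        - ((T.card * (T.card - 1) * ((T.card-2).choose (d-2)) : ℕ) : ℝ) := by
    have hstep : ∀ e : Edge n d, (if (e : Finset (Fin n)) ⊆ T then (0:ℝ)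
        else cE (e : Finset (Fin n)) T)
        = cE (e : Finset (Fin n)) T - (if (e : Finset (Fin n)) ⊆ T
            then cE (e : Finset (Fin n)) T else 0) := by
      intro e; by_cases he : (e : Finset (Fin n)) ⊆ T <;> simp [he]
    rw [Finset.sum_congr rfl (fun e _ => hstep e), Finset.sum_sub_distrib,
      sum_cE_all hd2 T, sum_cE_inside hd2 T]
  have hX : ∑ e : Edge n d, ((if H e then (1:ℝ) else 0) - p) *
        (if (e : Finset (Fin n)) ⊆ T then 0 else cE (e : Finset (Fin n)) T)
      = (∑ e : Edge n d, (if H e then (1:ℝ) else 0) *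
          (if (e : Finset (Fin n)) ⊆ T then 0 else cE (e : Finset (Fin n)) T))
        - p * ∑ e : Edge n d, (if (e : Finset (Fin n)) ⊆ T then (0:ℝ)
            else cE (e : Finset (Fin n)) T) := by
    rw [Finset.mul_sum, ← Finset.sum_sub_distrib]
    apply Finset.sum_congr rfl
    intro e _
    ring
  rw [hbsplit, hX, hSA]
  have NTcast : ((T.card * (T.card - 1) * ((T.card-2).choose (d-2)) : ℕ) : ℝ)
      = (T.card:ℝ) * ((T.card:ℝ) - 1) * (((T.card:ℕ)-2).choose (d-2) : ℝ) := by
    push_cast [Nat.cast_sub hk]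
    ring
  rw [NTcast]
  have hkne : (T.card:ℝ) ≠ 0 := ne_of_gt hk0
  field_simp
  ring

end Ident


section Numeric

lemma bernstein_numeric {V U L t D s lam : ℝ} (hV : 0 ≤ V) (hU : 0 < U)
    (hL : 0 < L) (hL2 : Real.log 2 < L)
    (ht : t = Real.sqrt (2*V*L) + 2/3*U*L) (hD : D = V + U*t/3)
    (hs : s = D * Real.log 2 / L) (hlam : lam = t/(D+s)) :
    L - Real.log 2 ≤ lam*t - lam^2*V*(2*(1 - lam*U/3))⁻¹ := by
  have hlog2 : 0 < Real.log 2 := Real.log_pos (by norm_num)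
  have hsn : 0 ≤ Real.sqrt (2*V*L) := Real.sqrt_nonneg _
  have ht0 : 0 < t := by rw [ht]; positivity
  have hD0 : 0 < D := by rw [hD]; positivity
  have hs0 : 0 < s := by rw [hs]; positivity
  have hDs : 0 < D + s := by linarith
  have hVs : 0 < V + s := by linarith
  have hone : 1 - lam*U/3 = (V+s)/(D+s) := by
    rw [hlam, hD]
    field_simp
    ring
  have hE : lam*t - lam^2*V*(2*(1 - lam*U/3))⁻¹ = t^2*(V+2*s)/(2*(V+s)*(D+s)) := by
    rw [hone, hlam]
    field_simp
    ring
  have hst := Real.sq_sqrt (show (0:ℝ) ≤ 2*V*L by positivity)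
  have ht2 : 2*L*V + 2/3*L*U*t ≤ t^2 := by
    rw [ht]
    nlinarith [mul_nonneg (mul_nonneg hU.le hL.le) hsn]
  have hstep1 : t^2/(2*(D+s)) ≤ t^2*(V+2*s)/(2*(V+s)*(D+s)) := by
    rw [div_le_div_iff₀ (by positivity) (by positivity)]
    nlinarith [mul_nonneg (mul_nonneg (sq_nonneg t) hDs.le) hs0.le]
  have hsub : L * s = D * Real.log 2 := by
    rw [hs]; field_simp
  have hstep2 : L - Real.log 2 ≤ t^2/(2*(D+s)) := by
    rw [le_div_iff₀ (by positivity)]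
    nlinarith [ht2, mul_pos hlog2 hs0, hD]
  linarith [hE ▸ (le_trans hstep2 hstep1)]

end Numeric

set_option maxHeartbeats 2000000 in
/-- **Lower tail of the quadratic statistic.** Under `P_T`, with probability at least
`1 − δ/2`, the statistic `q = ⟨u_T, M u_T⟩` is at least the signal term minus the
Bernstein fluctuation term. -/
theorem quadratic_statistic_lower_bound (n d : ℕ) (hd : 3 ≤ d) (hn : d ≤ n)
    (p : ℝ) (hp : p ∈ Set.Icc (0 : ℝ) 1)
    (δ : ℝ) (hδ0 : 0 < δ) (hδ1 : δ < 1)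
    (T : Finset (Fin n)) (k₀ : ℕ) (hT : T.card = k₀) (hk₀ : 1 ≤ k₀) :
    ENNReal.ofReal (1 - δ / 2) ≤
      condLaw n d p T
        {H |
          (1 - p) * ((k₀ : ℝ) - 1) * ((k₀ - 2).choose (d - 2) : ℝ)
              - (k₀ : ℝ)⁻¹ *
                (Real.sqrt (2 *
                      (p * (1 - p) *
                        ∑ e ∈ (univ : Finset (Finset (Fin n))).filter
                            (fun e => e.card = d ∧ ¬ e ⊆ T), cE e T ^ 2) *
                      Real.log (4 / δ))
                  + 2 / 3 * (((d : ℝ) - 1) * ((d : ℝ) - 2)) * Real.log (4 / δ))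
            ≤ uInd T ⬝ᵥ (centered n d p H).mulVec (uInd T)} := by
  classical
  obtain ⟨hp0, hp1⟩ := hp
  subst hT
  -- name the event first, so that it is replaced in the goal
  set Sev : Set (Config n d) := {H |
      (1 - p) * ((T.card : ℝ) - 1) * ((T.card - 2).choose (d - 2) : ℝ)
          - (T.card : ℝ)⁻¹ *
            (Real.sqrt (2 * (p * (1 - p) *
                ∑ e ∈ (univ : Finset (Finset (Fin n))).filter
                    (fun e => e.card = d ∧ ¬ e ⊆ T), cE e T ^ 2) * Real.log (4 / δ))
              + 2 / 3 * (((d : ℝ) - 1) * ((d : ℝ) - 2)) * Real.log (4 / δ))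
        ≤ uInd T ⬝ᵥ (centered n d p H).mulVec (uInd T)} with hSevdef
  haveI hprob : ∀ e : Edge n d, IsProbabilityMeasure (edgeLaw n d p T e) :=
    fun e => edgeLaw_isProb hp0 hp1 T e
  haveI : IsProbabilityMeasure (condLaw n d p T) := by
    unfold HPC.condLaw; infer_instance
  set μ := condLaw n d p T with hμdef
  -- abbreviations
  set L : ℝ := Real.log (4/δ) with hLdef
  clear_value L
  set U : ℝ := ((d:ℝ)-1)*((d:ℝ)-2) with hUdef
  clear_value U
  set a : Edge n d → ℝ := fun e =>
    if (e : Finset (Fin n)) ⊆ T then 0 else cE (e : Finset (Fin n)) T with hadef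
  clear_value a
  set V : ℝ := p * (1-p) * ∑ e ∈ (univ : Finset (Finset (Fin n))).filter
      (fun e => e.card = d ∧ ¬ e ⊆ T), cE e T ^ 2 with hVdef
  clear_value V
  have hd3 : (3:ℝ) ≤ (d:ℝ) := by exact_mod_cast hd
  have hU0 : 0 < U := by rw [hUdef]; nlinarith
  have hδ4 : (0:ℝ) < 4/δ := by positivity
  have hL0 : 0 < L := by
    rw [hLdef]
    exact Real.log_pos (by rw [lt_div_iff₀ hδ0]; linarith)
  have hL2 : Real.log 2 < L := by
    rw [hLdef]
    exact Real.log_lt_log (by norm_num) (by rw [lt_div_iff₀ hδ0]; nlinarith)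
  have hVsum : (0:ℝ) ≤ ∑ e ∈ (univ : Finset (Finset (Fin n))).filter
      (fun e => e.card = d ∧ ¬ e ⊆ T), cE e T ^ 2 :=
    Finset.sum_nonneg (fun e _ => sq_nonneg _)
  have hV0 : 0 ≤ V := by
    rw [hVdef]; apply mul_nonneg (mul_nonneg hp0 (by linarith)) hVsum
  -- V equals the subtype-sum version
  have hVeq : V = p * (1-p) * ∑ e : Edge n d, (a e)^2 := by
    rw [hVdef, hadef]
    congr 1
    have h1 : ∀ e : Edge n d, ((if (e : Finset (Fin n)) ⊆ T then (0:ℝ)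
        else cE (e : Finset (Fin n)) T))^2
        = (if ¬ (e : Finset (Fin n)) ⊆ T then cE (e : Finset (Fin n)) T ^2 else 0) := by
      intro e
      by_cases he : (e : Finset (Fin n)) ⊆ T <;> simp [he]
    rw [Finset.sum_congr rfl (fun e _ => h1 e),
      sum_edge (fun e => if ¬ e ⊆ T then cE e T ^2 else 0), ← Finset.sum_filter]
    apply Finset.sum_congr _ (fun e _ => rfl)
    ext e
    simp only [Finset.mem_filter, Finset.mem_powersetCard, Finset.mem_univ, true_and]
    constructor
    · rintro ⟨hc, hns⟩; exact ⟨⟨Finset.subset_univ _, hc⟩, hns⟩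
    · rintro ⟨⟨-, hc⟩, hns⟩; exact ⟨hc, hns⟩
  set t : ℝ := Real.sqrt (2*V*L) + 2/3*U*L with htdef
  clear_value t
  have ht0 : 0 < t := by
    rw [htdef]
    have h1 := Real.sqrt_nonneg (2*V*L)
    nlinarith [mul_pos hU0 hL0]
  set D : ℝ := V + U*t/3 with hDdef
  clear_value D
  have hD0 : 0 < D := by
    rw [hDdef]
    have h4 : 0 < U * t := mul_pos hU0 ht0
    linarith
  set sl : ℝ := D * Real.log 2 / L with hsldef
  clear_value sl
  have hsl0 : 0 < sl := by
    rw [hsldef]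
    exact div_pos (mul_pos hD0 (Real.log_pos (by norm_num))) hL0
  set lam : ℝ := t / (D + sl) with hlamdef
  clear_value lam
  have hlam0 : 0 < lam := by
    rw [hlamdef]
    exact div_pos ht0 (by linarith)
  have hlamU : 0 < lam * U := mul_pos hlam0 hU0
  have hlamU3 : lam * U < 3 := by
    rw [hlamdef, div_mul_eq_mul_div, div_lt_iff₀ (by linarith : (0:ℝ) < D + sl)]
    have hUt : U * t ≤ 3 * D := by rw [hDdef]; linarith
    nlinarith
  -- the random fluctuation
  set Y : Config n d → ℝ := fun H => ∑ e : Edge n d,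
    (p - (if H e then (1:ℝ) else 0)) * a e with hYdef
  clear_value Y
  -- bad events
  set B1 : Set (Config n d) := ⋃ (e : Edge n d) (_ : (e : Finset (Fin n)) ⊆ T),
    (Function.eval e ⁻¹' ({false} : Set Bool)) with hB1def
  set B2 : Set (Config n d) := {H | t ≤ Y H} with hB2def
  -- B1 is null
  have hB1null : μ B1 = 0 := by
    rw [hB1def]
    refine measure_iUnion_null fun e => measure_iUnion_null fun he => ?_
    rw [hμdef]
    unfold HPC.condLaw
    apply MeasureTheory.Measure.pi_eval_preimage_null
    unfold HPC.edgeLaw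
    rw [if_pos he, Measure.dirac_apply]
    simp
  -- Chernoff bound for B2
  have hint : Integrable (fun H => Real.exp (lam * Y H)) μ := Integrable.of_finite
  have hcher : (μ B2).toReal ≤ Real.exp (-lam*t) * ProbabilityTheory.mgf Y μ lam :=
    ProbabilityTheory.measure_ge_le_exp_mul_mgf (X := Y) (μ := μ) (t := lam)
      t hlam0.le hint
  -- compute/bound the mgf
  set g : ℝ := (2*(1 - lam*U/3))⁻¹ with hgdef
  clear_value g
  have hg0 : 0 ≤ g := by
    rw [hgdef]
    apply inv_nonneg.2
    nlinarith
  have hmgf : ProbabilityTheory.mgf Y μ lam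
      = ∏ e : Edge n d, ∫ b, Real.exp (lam * ((p - (if b then (1:ℝ) else 0)) * a e))
          ∂(edgeLaw n d p T e) := by
    unfold ProbabilityTheory.mgf
    have hexp : ∀ H : Config n d, Real.exp (lam * Y H)
        = ∏ e : Edge n d, Real.exp (lam * ((p - (if H e then (1:ℝ) else 0)) * a e)) := by
      intro H
      rw [hYdef, Finset.mul_sum, Real.exp_sum]
    rw [integral_congr_ae (Filter.Eventually.of_forall hexp)]
    rw [hμdef]
    unfold HPC.condLaw
    exact integral_pi_prod (fun e => edgeLaw n d p T e)
      (fun e b => Real.exp (lam * ((p - (if b then (1:ℝ) else 0)) * a e)))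
  have hmgfle : ProbabilityTheory.mgf Y μ lam
      ≤ Real.exp (lam^2 * (p*(1-p) * ∑ e : Edge n d, (a e)^2) * g) := by
    rw [hmgf]
    calc ∏ e : Edge n d, ∫ b, Real.exp (lam * ((p - (if b then (1:ℝ) else 0)) * a e))
          ∂(edgeLaw n d p T e)
        ≤ ∏ e : Edge n d, Real.exp (p * (1-p) * (a e)^2 * lam^2 * g) := by
          apply Finset.prod_le_prod
          · intro e _
            exact integral_nonneg (fun b => (Real.exp_pos _).le)
          · intro e _
            rw [hadef, hgdef]
            exact edgeLaw_mgf_bound hd hp0 hp1 hlam0.le hUdef hlamU hlamU3 T e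
      _ = Real.exp (lam^2 * (p*(1-p) * ∑ e : Edge n d, (a e)^2) * g) := by
          rw [← Real.exp_sum]
          congr 1
          rw [Finset.mul_sum, Finset.mul_sum, Finset.sum_mul]
          apply Finset.sum_congr rfl
          intro e _
          ring
  -- numeric bound
  have hnum := bernstein_numeric hV0 hU0 hL0 hL2 htdef hDdef hsldef hlamdef
  have htail : (μ B2).toReal ≤ δ/2 := by
    have h2 : Real.exp (-lam*t) * ProbabilityTheory.mgf Y μ lam
        ≤ Real.exp (-lam*t) * Real.exp (lam^2 * V * g) := by
      apply mul_le_mul_of_nonneg_left _ (Real.exp_pos _).le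
      rw [hVeq]
      exact hmgfle
    have h3 : Real.exp (-lam*t) * Real.exp (lam^2 * V * g)
        = Real.exp (lam^2*V*g - lam*t) := by
      rw [← Real.exp_add]; ring_nf
    have h4 : Real.exp (lam^2*V*g - lam*t) ≤ Real.exp (Real.log 2 - L) := by
      apply Real.exp_le_exp.2
      rw [hgdef]
      linarith [hnum]
    have h5 : Real.exp (Real.log 2 - L) = δ/2 := by
      rw [Real.exp_sub, Real.exp_log (by norm_num : (0:ℝ) < 2), hLdef,
        Real.exp_log hδ4]
      field_simp
      ring
    linarith
  have hB2meas : μ B2 ≤ ENNReal.ofReal (δ/2) :=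
    (ENNReal.le_ofReal_iff_toReal_le (measure_ne_top μ _) (by positivity)).2 htail
  -- the good event contains the complement of B1 ∪ B2
  have hsub : Sevᶜ ⊆ B1 ∪ B2 := by
    intro H hH
    by_cases hgood : ∀ e : Edge n d, (e : Finset (Fin n)) ⊆ T → H e = true
    · right
      rw [hB2def]
      by_contra hc
      simp only [Set.mem_setOf_eq, not_le] at hc
      apply hH
      rw [hSevdef]
      simp only [Set.mem_setOf_eq]
      rw [quad_identity hd T hk₀ p H hgood]
      have hX : ∑ e : Edge n d, ((if H e then (1:ℝ) else 0) - p) *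
          (if (e : Finset (Fin n)) ⊆ T then 0 else cE (e : Finset (Fin n)) T)
          = - Y H := by
        rw [hYdef, hadef, ← Finset.sum_neg_distrib]
        apply Finset.sum_congr rfl
        intro e _
        ring
      rw [hX]
      have hk0 : (0:ℝ) < (T.card : ℝ) := by exact_mod_cast hk₀
      have hmono : (T.card : ℝ)⁻¹ * Y H ≤ (T.card : ℝ)⁻¹ * t :=
        mul_le_mul_of_nonneg_left hc.le (inv_nonneg.2 hk0.le)
      rw [mul_neg]
      linarith [hmono]
    · left
      push_neg at hgood
      obtain ⟨e, he, hfalse⟩ := hgood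
      rw [hB1def]
      apply Set.mem_iUnion.2
      refine ⟨e, Set.mem_iUnion.2 ⟨he, ?_⟩⟩
      simp only [Set.mem_preimage, Function.eval, Set.mem_singleton_iff]
      exact Bool.not_eq_true _ ▸ hfalse
  -- wrap up
  have hSmeas : MeasurableSet Sev := (Set.to_countable _).measurableSet
  have hcompl : μ Sevᶜ ≤ ENNReal.ofReal (δ/2) := by
    calc μ Sevᶜ ≤ μ (B1 ∪ B2) := measure_mono hsub
      _ ≤ μ B1 + μ B2 := measure_union_le _ _
      _ = μ B2 := by rw [hB1null, zero_add]
      _ ≤ ENNReal.ofReal (δ/2) := hB2meas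
  have h1 : μ Sev = 1 - μ Sevᶜ := by
    have h2 := prob_compl_eq_one_sub (μ := μ) hSmeas.compl
    rwa [compl_compl] at h2
  rw [h1]
  have hofr : ENNReal.ofReal (1 - δ/2) = 1 - ENNReal.ofReal (δ/2) := by
    rw [← ENNReal.ofReal_one, ← ENNReal.ofReal_sub _ (by positivity)]
  rw [hofr]
  exact tsub_le_tsub_left hcompl 1
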